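/- arXiv:0908.2272 — 2 statements merged into one kernel-verified Lean document; each statement's English description precedes it below -/
import Mathlib

section
/- Let F be a group, let ρ₀ : F → PSL(2,ℝ) be a faithful homomorphism with discrete image, acting on the real projective line ℝP¹ (the set of points of ℂP¹ admitting real homogeneous coordinates), and let ρ : F → PSL(2,ℂ) be any homomorphism. Let π : ℝP¹ → ℂP¹ be a continuous map satisfying π(ρ₀(g)·a) = ρ(g)·π(a) for all g ∈ F and a ∈ ℝP¹. If x ∈ ℂP¹ is such that π⁻¹(x) is finite with at least two elements, then x is not a conical limit point of ρ(F): there is no sequence of pairwise distinct elements γ_n ∈ ρ(F) and points x⁺ ≠ x⁻ in ℂP¹ such that γ_n(x) → x⁺ and the γ_n converge to the constant map with value x⁻ uniformly on compact subsets of ℂP¹ ∖ {x}. -/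
set_option synthInstance.maxHeartbeats 1000000

noncomputable section

/-- `SL(2,ℂ)`. -/
abbrev SL2C := Matrix.SpecialLinearGroup (Fin 2) ℂ

/-- `PSL(2,ℂ) = SL(2,ℂ)/{±I}`, the quotient of `SL(2,ℂ)` by its center. -/
abbrev PSL2C := Matrix.ProjectiveSpecialLinearGroup (Fin 2) ℂ

/-- The complex projective line `ℂP¹`, the projectivization of `ℂ²`. -/
abbrev CP1 := Projectivization ℂ (Fin 2 → ℂ)

instance : TopologicalSpace SL2C := instTopologicalSpaceSubtype
instance : TopologicalSpace CP1 := instTopologicalSpaceQuotient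

theorem projmk_congr {v w : Fin 2 → ℂ} (hv : v ≠ 0) (h : v = w) :
    Projectivization.mk ℂ v hv = Projectivization.mk ℂ w (h ▸ hv) := by subst h; rfl

/-- The action of `SL(2,ℂ)` on `ℂP¹` by Möbius transformations. -/
def sl2smul (g : SL2C) (x : CP1) : CP1 :=
  Projectivization.map (Matrix.SpecialLinearGroup.toLin' g).toLinearMap
    (Matrix.SpecialLinearGroup.toLin' g).injective x

theorem sl2smul_mk (g : SL2C) (v : Fin 2 → ℂ) (hv : v ≠ 0) :
    sl2smul g (Projectivization.mk ℂ v hv) =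
      Projectivization.mk ℂ (Matrix.SpecialLinearGroup.toLin' g v)
        (fun h => hv (by simpa using (Matrix.SpecialLinearGroup.toLin' g).map_eq_zero_iff.mp h)) := by
  simp [sl2smul, Projectivization.map_mk]

instance : MulAction SL2C CP1 where
  smul := sl2smul
  one_smul x := by
    induction x using Projectivization.ind with
    | h v hv => show sl2smul 1 _ = _; rw [sl2smul_mk]; simp
  mul_smul g h x := by
    induction x using Projectivization.ind with
    | h v hv =>
      show sl2smul (g * h) _ = sl2smul g (sl2smul h _)
      rw [sl2smul_mk, sl2smul_mk, sl2smul_mk]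
      exact projmk_congr _ (by simp)

/-- The center of `SL(2,ℂ)` acts trivially on `ℂP¹`. -/
theorem center_sl2smul_eq (A : SL2C) (hA : A ∈ Subgroup.center SL2C) (x : CP1) :
    sl2smul A x = x := by
  obtain ⟨r, hr, hrA⟩ := Matrix.SpecialLinearGroup.mem_center_iff.mp hA
  have hr0 : r ≠ 0 := by
    intro h
    rw [h] at hr
    simp at hr
  induction x using Projectivization.ind with
  | h v hv =>
    rw [sl2smul_mk, Projectivization.mk_eq_mk_iff]
    refine ⟨Units.mk0 r hr0, ?_⟩
    have h1 : Matrix.SpecialLinearGroup.toLin' A v = (A : Matrix (Fin 2) (Fin 2) ℂ).mulVec v := by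
      rw [Matrix.SpecialLinearGroup.toLin'_apply, Matrix.toLin'_apply]
    rw [h1, ← hrA, Matrix.scalar_apply]
    ext i
    rw [Matrix.mulVec_diagonal]
    simp [Units.smul_def]

/-- The action of `PSL(2,ℂ)` on `ℂP¹`, descended from the action of `SL(2,ℂ)`. -/
def psl2Perm : PSL2C →* Equiv.Perm CP1 :=
  QuotientGroup.lift (Subgroup.center SL2C) (MulAction.toPermHom SL2C CP1)
    (fun A hA => Equiv.ext fun x => center_sl2smul_eq A hA x)

instance (priority := 2000) : SMul PSL2C CP1 := ⟨fun g x => psl2Perm g x⟩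

instance (priority := 2000) : MulAction PSL2C CP1 where
  one_smul x := by show psl2Perm 1 x = x; simp
  mul_smul g h x := by
    show psl2Perm (g * h) x = psl2Perm g (psl2Perm h x)
    simp [map_mul]


/-! ### Basic definitions: limit sets, commensurators, parabolicity, lattices -/

open Filter Topology

/-- The sequence `γ` of elements of `PSL(2,ℂ)` converges to the constant map with value `p`
uniformly on compact subsets of `ℂP¹ ∖ {q}`.  (Since `ℂP¹` is a compact Hausdorff space, its
uniform structure is unique, and uniform convergence to a constant `p` on a set `K` is
equivalent to the requirement that for every neighbourhood `U` of `p`, eventually all the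
images of `K` lie in `U`.) -/
def TendstoConstUniformlyAway (γ : ℕ → PSL2C) (q p : CP1) : Prop :=
  ∀ U ∈ 𝓝 p, ∀ K : Set CP1, IsCompact K → q ∉ K →
    ∀ᶠ n in atTop, ∀ x ∈ K, γ n • x ∈ U

/-- The limit set `Λ_Γ ⊆ ℂP¹` of a subgroup `Γ ≤ PSL(2,ℂ)`: the set of points `p` for which
there exist a point `q` and a sequence of pairwise distinct elements of `Γ` converging to the
constant map `p` uniformly on compact subsets of `ℂP¹ ∖ {q}`. -/
def limitSet (Γ : Subgroup PSL2C) : Set CP1 :=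
  {p | ∃ q : CP1, ∃ γ : ℕ → PSL2C, (∀ n, γ n ∈ Γ) ∧ Function.Injective γ ∧
    TendstoConstUniformlyAway γ q p}

/-- `ℝP¹ ⊆ ℂP¹`: the set of points admitting real homogeneous coordinates. -/
def realPoints : Set CP1 :=
  {x | ∃ (w : Fin 2 → ℂ) (hw : w ≠ 0), (∀ i, (w i).im = 0) ∧ x = Projectivization.mk ℂ w hw}

/-- A round circle in `ℂP¹` is a set of the form `g • ℝP¹` with `g ∈ PSL(2,ℂ)`. -/
def IsRoundCircle (C : Set CP1) : Prop :=
  ∃ g : PSL2C, C = (g • ·) '' realPoints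

/-- An element of `PSL(2,ℂ)` is parabolic if it is not the identity and some (equivalently, any)
matrix lift to `SL(2,ℂ)` has trace `±2`. -/
def IsParabolic (g : PSL2C) : Prop :=
  g ≠ 1 ∧ ∃ A : SL2C, (QuotientGroup.mk A : PSL2C) = g ∧
    (Matrix.trace (A : Matrix (Fin 2) (Fin 2) ℂ) = 2 ∨
      Matrix.trace (A : Matrix (Fin 2) (Fin 2) ℂ) = -2)

instance : MeasurableSpace PSL2C := borel _
instance (Δ : Subgroup PSL2C) : MeasurableSpace (PSL2C ⧸ Δ) := borel _

/-- A subgroup `Δ ≤ PSL(2,ℂ)` is a lattice if it is discrete and the quotient `PSL(2,ℂ)/Δ`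
carries a nonzero finite `PSL(2,ℂ)`-invariant Borel measure. -/
def IsLattice (Δ : Subgroup PSL2C) : Prop :=
  DiscreteTopology Δ ∧
  ∃ μ : MeasureTheory.Measure (PSL2C ⧸ Δ), μ ≠ 0 ∧ μ Set.univ < ⊤ ∧
    ∀ g : PSL2C, MeasureTheory.Measure.map (fun y => g • y) μ = μ

/-- A discrete subgroup `Γ ≤ PSL(2,ℂ)` is a fibre group if it is a normal subgroup of some
lattice `Δ ≤ PSL(2,ℂ)` with `Δ/Γ` infinite cyclic or infinite dihedral; equivalently, `Γ` is
the kernel of a surjective homomorphism from a lattice `Δ` onto `ℤ` or onto the infinite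
dihedral group. -/
def IsFibreGroup (Γ : Subgroup PSL2C) : Prop :=
  ∃ Δ : Subgroup PSL2C, IsLattice Δ ∧ Γ ≤ Δ ∧
    ((∃ f : Δ →* Multiplicative ℤ, Function.Surjective f ∧ f.ker = Γ.subgroupOf Δ) ∨
     (∃ f : Δ →* DihedralGroup 0, Function.Surjective f ∧ f.ker = Γ.subgroupOf Δ))


/-- `PSL(2,ℝ)` viewed as a subgroup of `PSL(2,ℂ)`: the image of `SL(2,ℝ)` under the
entrywise inclusion `SL(2,ℝ) → SL(2,ℂ)` followed by the quotient map to `PSL(2,ℂ)`. -/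
def PSL2R : Subgroup PSL2C :=
  ((QuotientGroup.mk' (Subgroup.center SL2C)).comp
    (Matrix.SpecialLinearGroup.map (algebraMap ℝ ℂ))).range

section AuxCT
open Filter Topology Matrix

/-- Convergence of `Projectivization.mk` along a convergent sequence of nonzero vectors. -/
theorem tendsto_projmk {u : ℕ → (Fin 2 → ℂ)} (hu : ∀ n, u n ≠ 0) {L : Fin 2 → ℂ} (hL : L ≠ 0)
    (h : Tendsto u atTop (𝓝 L)) :
    Tendsto (fun n => Projectivization.mk ℂ (u n) (hu n)) atTop
      (𝓝 (Projectivization.mk ℂ L hL)) := by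
  have h1 : Tendsto (fun n => (⟨u n, hu n⟩ : {v : Fin 2 → ℂ // v ≠ 0})) atTop
      (𝓝 (⟨L, hL⟩ : {v : Fin 2 → ℂ // v ≠ 0})) := tendsto_subtype_rng.mpr h
  have h2 : Continuous (Quotient.mk (projectivizationSetoid ℂ (Fin 2 → ℂ)) :
      {v : Fin 2 → ℂ // v ≠ 0} → CP1) := continuous_quot_mk
  exact (h2.tendsto _).comp h1

private def projMatAux (v : {v : Fin 2 → ℂ // v ≠ 0}) : Fin 2 → Fin 2 → ℂ :=
  fun i j => (v.1 i * (starRingEnd ℂ) (v.1 j)) /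
    ((Complex.normSq (v.1 0) + Complex.normSq (v.1 1) : ℝ) : ℂ)

private theorem projMatAux_denom_pos (v : {v : Fin 2 → ℂ // v ≠ 0}) :
    0 < Complex.normSq (v.1 0) + Complex.normSq (v.1 1) := by
  rcases v with ⟨v, hv⟩
  by_contra h
  push_neg at h
  have h0 : Complex.normSq (v 0) = 0 ∧ Complex.normSq (v 1) = 0 := by
    constructor <;> nlinarith [Complex.normSq_nonneg (v 0), Complex.normSq_nonneg (v 1)]
  apply hv
  funext i
  fin_cases i
  · exact Complex.normSq_eq_zero.mp h0.1
  · exact Complex.normSq_eq_zero.mp h0.2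

private theorem projMatAux_smul (t : ℂ) (b : {v : Fin 2 → ℂ // v ≠ 0})
    (a : {v : Fin 2 → ℂ // v ≠ 0}) (hab : (a : Fin 2 → ℂ) = t • (b : Fin 2 → ℂ)) :
    projMatAux a = projMatAux b := by
  have ht : t ≠ 0 := by
    rintro rfl
    exact a.2 (by simpa using hab)
  funext i j
  have hai : a.1 i = t * b.1 i := by rw [hab]; rfl
  have haj : a.1 j = t * b.1 j := by rw [hab]; rfl
  have ha0 : a.1 0 = t * b.1 0 := by rw [hab]; rfl
  have ha1 : a.1 1 = t * b.1 1 := by rw [hab]; rfl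
  have hnum : ∀ z w : ℂ, (t * z) * (starRingEnd ℂ) (t * w)
      = (Complex.normSq t : ℂ) * (z * (starRingEnd ℂ) w) := by
    intro z w
    rw [_root_.map_mul (starRingEnd ℂ), ← Complex.mul_conj]
    ring
  simp only [projMatAux, hai, haj, ha0, ha1, Complex.normSq_mul]
  rw [hnum (b.1 i) (b.1 j)]
  rw [show ((Complex.normSq t * Complex.normSq (b.1 0)
        + Complex.normSq t * Complex.normSq (b.1 1) : ℝ) : ℂ)
      = (Complex.normSq t : ℂ) * ((Complex.normSq (b.1 0) + Complex.normSq (b.1 1) : ℝ) : ℂ) by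
    push_cast; ring]
  exact mul_div_mul_left _ _
    (by exact_mod_cast (Complex.normSq_pos.mpr ht).ne')

private theorem projMatAux_inj (v w : {v : Fin 2 → ℂ // v ≠ 0}) (h : projMatAux v = projMatAux w) :
    Projectivization.mk ℂ v.1 v.2 = Projectivization.mk ℂ w.1 w.2 := by
  obtain ⟨j, hj⟩ : ∃ j, v.1 j ≠ 0 := by
    by_contra hc; push_neg at hc; exact v.2 (funext hc)
  set Dv := ((Complex.normSq (v.1 0) + Complex.normSq (v.1 1) : ℝ) : ℂ) with hDvdef
  set Dw := ((Complex.normSq (w.1 0) + Complex.normSq (w.1 1) : ℝ) : ℂ) with hDwdef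
  have hDv : Dv ≠ 0 := by
    rw [hDvdef]; exact Complex.ofReal_ne_zero.mpr (projMatAux_denom_pos v).ne'
  have hDw : Dw ≠ 0 := by
    rw [hDwdef]; exact Complex.ofReal_ne_zero.mpr (projMatAux_denom_pos w).ne'
  have hcj : (starRingEnd ℂ) (v.1 j) ≠ 0 := by
    intro h0
    apply hj
    simpa using congrArg (starRingEnd ℂ) h0
  have hjj := congrFun (congrFun h j) j
  simp only [projMatAux] at hjj
  have hwj : w.1 j ≠ 0 := by
    intro h0
    rw [h0] at hjj
    simp only [map_zero, zero_mul, mul_zero, zero_div] at hjj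
    rw [div_eq_zero_iff] at hjj
    rcases hjj with hjj | hjj
    · exact hj (by simpa [Complex.mul_conj, Complex.normSq_eq_zero] using hjj)
    · exact hDv hjj
  have hcwj : (starRingEnd ℂ) (w.1 j) ≠ 0 := by
    intro h0
    apply hwj
    simpa using congrArg (starRingEnd ℂ) h0
  have key : ∀ i, v.1 i * (starRingEnd ℂ) (v.1 j) * Dw
      = w.1 i * (starRingEnd ℂ) (w.1 j) * Dv := by
    intro i
    have hij := congrFun (congrFun h i) j
    simp only [projMatAux] at hij
    rw [div_eq_div_iff hDv hDw] at hij
    exact hij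
  set α := (Dv * (starRingEnd ℂ) (w.1 j)) / (Dw * (starRingEnd ℂ) (v.1 j)) with hα
  have hα0 : α ≠ 0 := div_ne_zero (mul_ne_zero hDv hcwj) (mul_ne_zero hDw hcj)
  have hvw : (Units.mk0 α hα0) • w.1 = v.1 := by
    funext i
    show α * w.1 i = v.1 i
    rw [hα, div_mul_eq_mul_div, div_eq_iff (mul_ne_zero hDw hcj)]
    linear_combination - key i
  exact ((Projectivization.mk_eq_mk_iff ℂ _ _ v.2 w.2).mpr ⟨Units.mk0 α hα0, hvw⟩)

noncomputable def projMat : CP1 → (Fin 2 → Fin 2 → ℂ) :=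
  Projectivization.lift projMatAux (fun a b t h => projMatAux_smul t b a h)

theorem continuous_projMat : Continuous projMat := by
  have hc : Continuous projMatAux := by
    apply continuous_pi
    intro i
    apply continuous_pi
    intro j
    apply Continuous.div
    · exact (((continuous_apply i).comp continuous_subtype_val).mul
        (Complex.continuous_conj.comp ((continuous_apply j).comp continuous_subtype_val)))
    · exact Complex.continuous_ofReal.comp
        ((Complex.continuous_normSq.comp ((continuous_apply 0).comp continuous_subtype_val)).add
          (Complex.continuous_normSq.comp ((continuous_apply 1).comp continuous_subtype_val)))
    · intro v
      exact_mod_cast (projMatAux_denom_pos v).ne'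
  exact Continuous.quotient_lift hc _

theorem projMat_injective : Function.Injective projMat := by
  intro x y h
  induction x using Projectivization.ind with
  | h v hv =>
  induction y using Projectivization.ind with
  | h w hw =>
  exact projMatAux_inj ⟨v, hv⟩ ⟨w, hw⟩ h

instance : T2Space CP1 := T2Space.of_injective_continuous projMat_injective continuous_projMat

end AuxCT
section AuxLA
open Matrix

theorem span_pair_top {v w : Fin 2 → ℂ} (hv : v ≠ 0) (hw : w ≠ 0)
    (hne : Projectivization.mk ℂ v hv ≠ Projectivization.mk ℂ w hw) :
    Submodule.span ℂ {v, w} = ⊤ := by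
  have hnp : ∀ a : ℂ, a • w ≠ v := by
    intro a h
    rcases eq_or_ne a 0 with rfl | ha
    · exact hv (by simpa using h.symm)
    · exact hne ((Projectivization.mk_eq_mk_iff ℂ _ _ hv hw).mpr ⟨Units.mk0 a ha, h⟩)
  have hli : LinearIndependent ℂ ![v, w] := by
    rw [linearIndependent_fin2]
    refine ⟨by simpa using hw, by simpa using hnp⟩
  have hcard : Fintype.card (Fin 2) = Module.finrank ℂ (Fin 2 → ℂ) := by
    simp [Module.finrank_fin_fun]
  have := hli.span_eq_top_of_card_eq_finrank hcard
  rw [show Set.range ![v, w] = {v, w} by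
    ext u; simp [Matrix.range_cons, Matrix.range_empty]; tauto] at this
  exact this

theorem matrix_eq_zero_of_mulVec_pair {B : Matrix (Fin 2) (Fin 2) ℂ} {v w : Fin 2 → ℂ}
    (hsp : Submodule.span ℂ {v, w} = ⊤) (hBv : B *ᵥ v = 0) (hBw : B *ᵥ w = 0) : B = 0 := by
  have hker : LinearMap.ker B.mulVecLin = ⊤ := by
    rw [eq_top_iff, ← hsp]
    refine Submodule.span_le.mpr ?_
    rintro u (rfl | rfl)
    · simpa [Matrix.mulVecLin_apply] using hBv
    · simpa [Matrix.mulVecLin_apply] using hBw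
  have h0 : B.mulVecLin = 0 := LinearMap.ker_eq_top.mp hker
  ext i j
  have := congrFun (LinearMap.congr_fun h0 (Pi.single j 1)) i
  simpa [Matrix.mulVecLin_apply, Matrix.mulVec_single] using this

theorem ker_point_unique {B : Matrix (Fin 2) (Fin 2) ℂ} (hB : B ≠ 0) {v w : Fin 2 → ℂ}
    (hv : v ≠ 0) (hw : w ≠ 0) (hBv : B *ᵥ v = 0) (hBw : B *ᵥ w = 0) :
    Projectivization.mk ℂ v hv = Projectivization.mk ℂ w hw := by
  by_contra hne
  exact hB (matrix_eq_zero_of_mulVec_pair (span_pair_top hv hw hne) hBv hBw)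

theorem image_point_unique {B : Matrix (Fin 2) (Fin 2) ℂ} (hdet : B.det = 0)
    {v w : Fin 2 → ℂ} (hBv : B *ᵥ v ≠ 0) (hBw : B *ᵥ w ≠ 0) :
    Projectivization.mk ℂ (B *ᵥ v) hBv = Projectivization.mk ℂ (B *ᵥ w) hBw := by
  by_contra hne
  have hsp := span_pair_top hBv hBw hne
  have hr : LinearMap.range B.mulVecLin = ⊤ := by
    rw [eq_top_iff, ← hsp]
    refine Submodule.span_le.mpr ?_
    rintro u (rfl | rfl)
    · exact ⟨v, by simp [Matrix.mulVecLin_apply]⟩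
    · exact ⟨w, by simp [Matrix.mulVecLin_apply]⟩
  have hinj : Function.Injective B.mulVecLin :=
    LinearMap.injective_iff_surjective.mpr (LinearMap.range_eq_top.mp hr)
  obtain ⟨k, hk0, hk⟩ := (Matrix.exists_mulVec_eq_zero_iff).mpr hdet
  exact hk0 (hinj (by simpa [Matrix.mulVecLin_apply] using hk))

theorem mulVec_real {B : Matrix (Fin 2) (Fin 2) ℂ} (hB : ∀ i j, (B i j).im = 0)
    {v : Fin 2 → ℂ} (hv : ∀ i, (v i).im = 0) (i : Fin 2) : ((B *ᵥ v) i).im = 0 := by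
  simp [Matrix.mulVec, dotProduct, Fin.sum_univ_two, Complex.add_im, Complex.mul_im, hB, hv]

theorem SL2C_mulVec_ne_zero (A : SL2C) {v : Fin 2 → ℂ} (hv : v ≠ 0) :
    (↑A : Matrix (Fin 2) (Fin 2) ℂ) *ᵥ v ≠ 0 := by
  intro h
  apply hv
  have h1 : (↑(A⁻¹) : Matrix (Fin 2) (Fin 2) ℂ) * (↑A : Matrix (Fin 2) (Fin 2) ℂ) = 1 := by
    rw [← Matrix.SpecialLinearGroup.coe_mul, inv_mul_cancel]
    simp
  calc v = ((↑(A⁻¹) : Matrix (Fin 2) (Fin 2) ℂ) * (↑A : Matrix (Fin 2) (Fin 2) ℂ)) *ᵥ v := by rw [h1, Matrix.one_mulVec]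
  _ = (↑(A⁻¹) : Matrix (Fin 2) (Fin 2) ℂ) *ᵥ ((↑A : Matrix (Fin 2) (Fin 2) ℂ) *ᵥ v) := by
      rw [Matrix.mulVec_mulVec]
  _ = 0 := by rw [h, Matrix.mulVec_zero]

theorem psl_mk_smul (A : SL2C) (v : Fin 2 → ℂ) (hv : v ≠ 0) :
    (QuotientGroup.mk A : PSL2C) • Projectivization.mk ℂ v hv
      = Projectivization.mk ℂ ((↑A : Matrix (Fin 2) (Fin 2) ℂ) *ᵥ v)
          (SL2C_mulVec_ne_zero A hv) := by
  have h0 : (QuotientGroup.mk A : PSL2C) • Projectivization.mk ℂ v hv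
      = sl2smul A (Projectivization.mk ℂ v hv) := by
    show psl2Perm _ _ = _
    rfl
  rw [h0, sl2smul_mk]
  apply projmk_congr
  rw [Matrix.SpecialLinearGroup.toLin'_apply, Matrix.toLin'_apply]

end AuxLA
section AuxDisc
open Filter Topology Matrix

def flatM (A : Matrix (Fin 2) (Fin 2) ℂ) : Fin 2 → Fin 2 → ℂ := fun i j => A i j
def unflatM (m : Fin 2 → Fin 2 → ℂ) : Matrix (Fin 2) (Fin 2) ℂ := Matrix.of m

theorem continuous_mulVec_fixed (w : Fin 2 → ℂ) :
    Continuous fun m : Fin 2 → Fin 2 → ℂ => unflatM m *ᵥ w := by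
  apply continuous_pi
  intro i
  have : (fun m : Fin 2 → Fin 2 → ℂ => (unflatM m *ᵥ w) i)
      = fun m => m i 0 * w 0 + m i 1 * w 1 := by
    funext m
    simp [unflatM, Matrix.mulVec, dotProduct, Fin.sum_univ_two]
  rw [this]
  fun_prop

theorem lift_norm_tendsto (Γ : Subgroup PSL2C) (hΓ : DiscreteTopology Γ)
    (δ : ℕ → PSL2C) (hmem : ∀ n, δ n ∈ Γ) (hinj : Function.Injective δ)
    (A : ℕ → SL2C) (hA : ∀ n, (QuotientGroup.mk (A n) : PSL2C) = δ n) :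
    Tendsto (fun n => ‖flatM ↑(A n)‖) atTop atTop := by
  haveI := hΓ
  by_contra hcon
  rw [Filter.tendsto_atTop] at hcon
  push_neg at hcon
  obtain ⟨b, hb⟩ := hcon
  have hb' : ∃ᶠ n in atTop, flatM ↑(A n) ∈ Metric.closedBall (0 : Fin 2 → Fin 2 → ℂ) b := by
    refine hb.mono fun n hn => ?_
    rw [Metric.mem_closedBall, dist_zero_right]
    linarith [hn]
  obtain ⟨L, _, φ, hφ, hconv⟩ :=
    tendsto_subseq_of_frequently_bounded Metric.isBounded_closedBall hb'
  have hMA : Tendsto (fun n => (↑(A (φ n)) : Matrix (Fin 2) (Fin 2) ℂ)) atTop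
      (𝓝 (unflatM L)) := hconv
  have hMA' : Tendsto (fun n => (↑(A (φ (n + 1))) : Matrix (Fin 2) (Fin 2) ℂ)) atTop
      (𝓝 (unflatM L)) := hMA.comp (tendsto_add_atTop_nat 1)
  -- det of the limit is 1
  have hdet1 : (unflatM L).det = 1 := by
    have hdc : Continuous fun X : Matrix (Fin 2) (Fin 2) ℂ => X.det := continuous_id.matrix_det
    have h1 : Tendsto (fun n => ((↑(A (φ n)) : Matrix (Fin 2) (Fin 2) ℂ)).det) atTop
        (𝓝 (unflatM L).det) := (hdc.tendsto _).comp hMA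
    have h2 : (fun n => ((↑(A (φ n)) : Matrix (Fin 2) (Fin 2) ℂ)).det) = fun _ => (1 : ℂ) := by
      funext n; exact (A (φ n)).2
    rw [h2] at h1
    exact tendsto_nhds_unique h1 tendsto_const_nhds
  -- the products (A (φ n))⁻¹ * A (φ (n+1)) tend to 1 in SL2C-matrix space
  have hcont2 : Continuous fun p : Matrix (Fin 2) (Fin 2) ℂ × Matrix (Fin 2) (Fin 2) ℂ =>
      (adjugate p.1) * p.2 := (continuous_fst.matrix_adjugate).matrix_mul continuous_snd
  have hpair := hMA.prodMk_nhds hMA'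
  have hs1 : Tendsto (fun n => adjugate (↑(A (φ n)) : Matrix (Fin 2) (Fin 2) ℂ) *
      (↑(A (φ (n + 1))) : Matrix (Fin 2) (Fin 2) ℂ)) atTop (𝓝 1) := by
    have := (hcont2.tendsto (unflatM L, unflatM L)).comp hpair
    simpa [Matrix.adjugate_mul, hdet1, Function.comp_def] using this
  set s : ℕ → SL2C := fun n => (A (φ n))⁻¹ * A (φ (n + 1)) with hs
  have hscoe : ∀ n, (↑(s n) : Matrix (Fin 2) (Fin 2) ℂ)
      = adjugate (↑(A (φ n)) : Matrix (Fin 2) (Fin 2) ℂ) *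
        (↑(A (φ (n + 1))) : Matrix (Fin 2) (Fin 2) ℂ) := by
    intro n
    rw [hs]
    simp [Matrix.SpecialLinearGroup.coe_inv]
  have hs2 : Tendsto (fun n => (↑(s n) : Matrix (Fin 2) (Fin 2) ℂ)) atTop (𝓝 1) := by
    simp only [hscoe]; exact hs1
  have hs3 : Tendsto s atTop (𝓝 1) := by
    apply tendsto_subtype_rng.mpr
    simpa using hs2
  -- push to PSL2C
  have hmkc : Continuous (QuotientGroup.mk : SL2C → PSL2C) := continuous_quot_mk
  have hd1 : Tendsto (fun n => (QuotientGroup.mk (s n) : PSL2C)) atTop (𝓝 1) := by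
    have := (hmkc.tendsto 1).comp hs3
    simpa [Function.comp_def] using this
  set d : ℕ → PSL2C := fun n => (δ (φ n))⁻¹ * δ (φ (n + 1)) with hdd
  have hd : ∀ n, (QuotientGroup.mk (s n) : PSL2C) = d n := by
    intro n
    rw [hs, hdd]
    simp only [QuotientGroup.mk_mul, QuotientGroup.mk_inv, hA]
  have hdmem : ∀ n, d n ∈ Γ := fun n => mul_mem (inv_mem (hmem _)) (hmem _)
  have hdne : ∀ n, d n ≠ 1 := by
    intro n h1
    have := hinj (inv_mul_eq_one.mp h1)
    exact absurd this (Nat.ne_of_lt (hφ (Nat.lt_succ_self n)))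
  have ht : Tendsto (fun n => (⟨d n, hdmem n⟩ : Γ)) atTop (𝓝 (⟨1, Γ.one_mem⟩ : Γ)) := by
    apply tendsto_subtype_rng.mpr
    simp only [hd] at hd1
    simpa using hd1
  rw [nhds_discrete, tendsto_pure] at ht
  obtain ⟨n, hn⟩ := ht.exists
  exact hdne n (congrArg Subtype.val hn)

end AuxDisc
section AuxRP
open Filter Topology

private theorem realPt_mem (r : ℝ) :
    Projectivization.mk ℂ ![1, (r : ℂ)] (by
      intro h
      have := congrFun h 0
      simp at this) ∈ realPoints := by
  refine ⟨![1, (r : ℂ)], _, fun i => ?_, rfl⟩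
  fin_cases i <;> simp

theorem realPoints_infinite : Infinite realPoints := by
  refine Infinite.of_injective (fun r : ℝ =>
    (⟨Projectivization.mk ℂ ![1, (r : ℂ)] (by
      intro h
      have := congrFun h 0
      simp at this), realPt_mem r⟩ : realPoints)) ?_
  intro r s h
  have h' := congrArg Subtype.val h
  rw [Projectivization.mk_eq_mk_iff] at h'
  obtain ⟨u, hu⟩ := h'
  have h0 := congrFun hu 0
  have h1 := congrFun hu 1
  simp only [Pi.smul_apply, Matrix.cons_val_zero, Matrix.cons_val_one, Matrix.head_cons,
    Units.smul_def, smul_eq_mul, mul_one] at h0 h1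
  rw [h0] at h1
  simpa using h1.symm
end AuxRP
open Matrix in
/-- Points of `ℂP¹` with more than one preimage under a continuous equivariant boundary map
defined on `ℝP¹` (a Cannon–Thurston map for a Fuchsian group `ρ₀(F)`) are not conical limit
points of `ρ(F)`. -/
theorem not_conicalLimitPoint_of_multiple_preimages_fuchsian
    (F : Type) [Group F] (ρ₀ : F →* PSL2C)
    (hρ₀R : ∀ g : F, ρ₀ g ∈ PSL2R)
    (hfaithful : Function.Injective ρ₀)
    (hdisc : DiscreteTopology ρ₀.range)
    (hinv : ∀ (g : F) (a : realPoints), ρ₀ g • (a : CP1) ∈ realPoints)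
    (ρ : F →* PSL2C) (π : realPoints → CP1) (hπ : Continuous π)
    (heqv : ∀ (g : F) (a : realPoints), π ⟨ρ₀ g • (a : CP1), hinv g a⟩ = ρ g • π a)
    (x : CP1) (hfin : (π ⁻¹' {x}).Finite)
    (h2 : ∃ a b : realPoints, π a = x ∧ π b = x ∧ a ≠ b) :
    ¬ ∃ (γ : ℕ → PSL2C) (xp xm : CP1), (∀ n, γ n ∈ ρ.range) ∧ Function.Injective γ ∧
        xp ≠ xm ∧ Filter.Tendsto (fun n => γ n • x) Filter.atTop (nhds xp) ∧
        TendstoConstUniformlyAway γ x xm := by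
  rintro ⟨γ, xp, xm, hmemγ, hinjγ, hnepm, hxp, hTCUA⟩
  obtain ⟨a, b, hax, hbx, hab⟩ := h2
  -- choose group elements mapping to the γₙ
  choose g hg using fun n => hmemγ n
  have hginj : Function.Injective g := fun m n h => hinjγ (by rw [← hg, ← hg, h])
  set δ : ℕ → PSL2C := fun n => ρ₀ (g n) with hδdef
  have hδinj : Function.Injective δ := fun m n h => hginj (hfaithful h)
  -- choose real matrix lifts
  choose R hR using fun n => hρ₀R (g n)
  set A : ℕ → SL2C := fun n => Matrix.SpecialLinearGroup.map (algebraMap ℝ ℂ) (R n) with hAdef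
  have hAδ : ∀ n, (QuotientGroup.mk (A n) : PSL2C) = δ n := fun n => hR n
  have hAreal : ∀ n i j, ((↑(A n) : Matrix (Fin 2) (Fin 2) ℂ) i j).im = 0 := by
    intro n i j
    show (((algebraMap ℝ ℂ).mapMatrix (↑(R n) : Matrix (Fin 2) (Fin 2) ℝ)) i j).im = 0
    simp [Matrix.map_apply, RingHom.mapMatrix_apply]
  -- norms tend to infinity
  set c : ℕ → ℝ := fun n => ‖flatM ↑(A n)‖ with hcdef
  have hcpos : ∀ n, 0 < c n := by
    intro n
    rw [hcdef]
    rw [norm_pos_iff]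
    intro h0
    have hz : (↑(A n) : Matrix (Fin 2) (Fin 2) ℂ) = 0 := by
      ext i j; exact congrFun (congrFun h0 i) j
    have hdet := (A n).2
    rw [hz] at hdet
    simp [Matrix.det_fin_two] at hdet
  have hctop : Filter.Tendsto c Filter.atTop Filter.atTop :=
    lift_norm_tendsto ρ₀.range hdisc δ (fun n => ⟨g n, rfl⟩) hδinj A hAδ
  -- normalized matrices live on the unit sphere
  set N : ℕ → (Fin 2 → Fin 2 → ℂ) := fun n => ((c n : ℂ))⁻¹ • flatM ↑(A n) with hNdef
  have hNsph : ∀ n, N n ∈ Metric.sphere (0 : Fin 2 → Fin 2 → ℂ) 1 := by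
    intro n
    rw [mem_sphere_zero_iff_norm]
    show ‖((c n : ℂ))⁻¹ • flatM ↑(A n)‖ = 1
    rw [norm_smul, norm_inv, Complex.norm_real, Real.norm_eq_abs,
      abs_of_pos (hcpos n)]
    exact inv_mul_cancel₀ (hcpos n).ne'
  obtain ⟨B, hBmem, φ, hφ, hNB⟩ := (isCompact_sphere (0 : Fin 2 → Fin 2 → ℂ) 1).tendsto_subseq hNsph
  have hB0 : B ≠ 0 := by
    intro h0
    rw [h0, mem_sphere_zero_iff_norm] at hBmem
    simp at hBmem
  have hent : ∀ i j, Filter.Tendsto (fun n => N (φ n) i j) Filter.atTop (𝓝 (B i j)) := by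
    intro i j
    exact (tendsto_pi_nhds.mp (tendsto_pi_nhds.mp hNB i) j)
  have hBreal : ∀ i j, (B i j).im = 0 := by
    intro i j
    have him : Filter.Tendsto (fun n => (N (φ n) i j).im) Filter.atTop (𝓝 (B i j).im) :=
      (Complex.continuous_im.tendsto _).comp (hent i j)
    have hv : (fun n => (N (φ n) i j).im) = fun _ => (0 : ℝ) := by
      funext n
      rw [hNdef]
      simp only [Pi.smul_apply, smul_eq_mul, Complex.mul_im]
      rw [← Complex.ofReal_inv]
      simp [Complex.ofReal_im, flatM, hAreal]
    rw [hv] at him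
    exact tendsto_nhds_unique him tendsto_const_nhds
  have hdetB : (unflatM B).det = 0 := by
    have hdc : Continuous fun X : Matrix (Fin 2) (Fin 2) ℂ => X.det := continuous_id.matrix_det
    have h1 : Filter.Tendsto (fun n => (unflatM (N (φ n))).det) Filter.atTop
        (𝓝 (unflatM B).det) := (hdc.tendsto _).comp hNB
    have h2 : ∀ n, (unflatM (N (φ n))).det = ((c (φ n) : ℂ))⁻¹ ^ 2 := by
      intro n
      have : unflatM (N (φ n)) = ((c (φ n) : ℂ))⁻¹ • (↑(A (φ n)) : Matrix (Fin 2) (Fin 2) ℂ) := rfl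
      rw [this, Matrix.det_smul, (A (φ n)).2]
      simp
    have h3 : Filter.Tendsto (fun n => ((c (φ n) : ℂ))⁻¹ ^ 2) Filter.atTop (𝓝 0) := by
      have hc1 : Filter.Tendsto (fun n => (c (φ n))⁻¹) Filter.atTop (𝓝 0) :=
        tendsto_inv_atTop_zero.comp (hctop.comp hφ.tendsto_atTop)
      have hc3 : Filter.Tendsto (fun n => ((c (φ n) : ℂ))⁻¹) Filter.atTop (𝓝 0) := by
        have h := (Complex.continuous_ofReal.tendsto 0).comp hc1
        simpa [Function.comp_def, Complex.ofReal_inv, Complex.ofReal_zero] using h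
      have := hc3.pow 2
      simpa using this
    rw [funext h2] at h1
    exact tendsto_nhds_unique h1 h3
  -- kernel direction
  obtain ⟨k, hk0, hkker⟩ := (Matrix.exists_mulVec_eq_zero_iff).mpr hdetB
  set kpt := Projectivization.mk ℂ k hk0 with hkpt
  have hBne : unflatM B ≠ 0 := by
    intro h0
    apply hB0
    funext i j
    exact congrFun (congrFun h0 i) j
  -- choose a preimage point distinct from the kernel point
  have hvalne : (a : CP1) ≠ (b : CP1) := fun h => hab (Subtype.ext h)
  obtain ⟨a0, ha0x, ha0k⟩ : ∃ a0 : realPoints, π a0 = x ∧ (a0 : CP1) ≠ kpt := by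
    by_cases hcase : (a : CP1) = kpt
    · exact ⟨b, hbx, fun hh => hvalne (hcase.trans hh.symm)⟩
    · exact ⟨a, hax, hcase⟩
  obtain ⟨w0, hw0ne, hw0real, hw0eq⟩ := a0.2
  have hBw0 : unflatM B *ᵥ w0 ≠ 0 := by
    intro h0
    exact ha0k (by rw [hw0eq]; exact ker_point_unique hBne hw0ne hk0 h0 hkker)
  -- choose an auxiliary real point
  have hfinT : ({p : realPoints | π p = x} ∪ {p : realPoints | (p : CP1) = kpt}).Finite := by
    apply Set.Finite.union
    · exact hfin
    · apply Set.Subsingleton.finite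
      intro p hp q hq
      exact Subtype.ext (hp.trans hq.symm)
  haveI : Infinite realPoints := realPoints_infinite
  obtain ⟨a', ha'⟩ := hfinT.infinite_compl.nonempty
  rw [Set.mem_compl_iff, Set.mem_union] at ha'
  push_neg at ha'
  obtain ⟨ha'x, ha'k⟩ := ha'
  obtain ⟨w', hw'ne, hw'real, hw'eq⟩ := a'.2
  have hBw' : unflatM B *ᵥ w' ≠ 0 := by
    intro h0
    exact ha'k (show (a' : CP1) = kpt by rw [hw'eq]; exact ker_point_unique hBne hw'ne hk0 h0 hkker)
  -- the common limit point
  have hreal0 : Projectivization.mk ℂ (unflatM B *ᵥ w0) hBw0 ∈ realPoints :=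
    ⟨_, hBw0, mulVec_real hBreal hw0real, rfl⟩
  have hreal' : Projectivization.mk ℂ (unflatM B *ᵥ w') hBw' ∈ realPoints :=
    ⟨_, hBw', mulVec_real hBreal hw'real, rfl⟩
  have himg : Projectivization.mk ℂ (unflatM B *ᵥ w0) hBw0
      = Projectivization.mk ℂ (unflatM B *ᵥ w') hBw' := image_point_unique hdetB hBw0 hBw'
  -- the key convergence statement
  have key : ∀ (w : Fin 2 → ℂ) (hwne : w ≠ 0) (hBw : unflatM B *ᵥ w ≠ 0),
      Filter.Tendsto (fun n => δ (φ n) • Projectivization.mk ℂ w hwne) Filter.atTop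
        (𝓝 (Projectivization.mk ℂ (unflatM B *ᵥ w) hBw)) := by
    intro w hwne hBw
    have hNw : ∀ n, unflatM (N n) *ᵥ w
        = ((c n : ℂ))⁻¹ • ((↑(A n) : Matrix (Fin 2) (Fin 2) ℂ) *ᵥ w) := by
      intro n
      have : unflatM (N n) = ((c n : ℂ))⁻¹ • (↑(A n) : Matrix (Fin 2) (Fin 2) ℂ) := rfl
      rw [this, Matrix.smul_mulVec]
    have hcne : ∀ n, ((c n : ℂ)) ≠ 0 := by
      intro n
      exact_mod_cast (hcpos n).ne'
    have hNwne : ∀ n, unflatM (N n) *ᵥ w ≠ 0 := by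
      intro n
      rw [hNw n]
      exact smul_ne_zero (inv_ne_zero (hcne n)) (SL2C_mulVec_ne_zero _ hwne)
    have h1 : ∀ n, δ (φ n) • Projectivization.mk ℂ w hwne
        = Projectivization.mk ℂ (unflatM (N (φ n)) *ᵥ w) (hNwne (φ n)) := by
      intro n
      rw [← hAδ (φ n), psl_mk_smul]
      rw [Projectivization.mk_eq_mk_iff]
      refine ⟨Units.mk0 ((c (φ n) : ℂ)) (hcne (φ n)), ?_⟩
      rw [hNw (φ n)]
      rw [Units.smul_def]
      rw [smul_smul]
      simp [mul_inv_cancel₀ (hcne (φ n))]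
    have h3 : Filter.Tendsto (fun n => unflatM (N (φ n)) *ᵥ w) Filter.atTop
        (𝓝 (unflatM B *ᵥ w)) := ((continuous_mulVec_fixed w).tendsto B).comp hNB
    have h4 := tendsto_projmk (fun n => hNwne (φ n)) hBw h3
    simpa only [h1] using h4
  -- identify x⁺
  have hkey0 := key w0 hw0ne hBw0
  rw [← hw0eq] at hkey0
  have hsub0 : Filter.Tendsto (fun n => (⟨δ (φ n) • (a0 : CP1), hinv (g (φ n)) a0⟩ : realPoints))
      Filter.atTop (𝓝 ⟨_, hreal0⟩) := tendsto_subtype_rng.mpr hkey0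
  have hπ0 : Filter.Tendsto (fun n => γ (φ n) • x) Filter.atTop
      (𝓝 (π ⟨_, hreal0⟩)) := by
    have h5 := (hπ.tendsto _).comp hsub0
    have h6 : (fun n => π (⟨δ (φ n) • (a0 : CP1), hinv (g (φ n)) a0⟩ : realPoints))
        = fun n => γ (φ n) • x := by
      funext n
      rw [heqv (g (φ n)) a0, hg, ha0x]
    rw [← h6]
    exact h5
  have hxpφ : Filter.Tendsto (fun n => γ (φ n) • x) Filter.atTop (𝓝 xp) :=
    hxp.comp hφ.tendsto_atTop
  have hxpeq : xp = π ⟨_, hreal0⟩ := tendsto_nhds_unique hxpφ hπ0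
  -- identify x⁻
  set y := π a' with hydef
  have hxny : x ∉ ({y} : Set CP1) := by
    simp only [Set.mem_singleton_iff]
    intro h
    exact ha'x (by rw [hydef] at h; exact h.symm)
  have hymx : Filter.Tendsto (fun n => γ n • y) Filter.atTop (𝓝 xm) := by
    rw [Filter.tendsto_def]
    intro s hs
    exact (hTCUA s hs {y} isCompact_singleton hxny).mono fun n hn => hn y rfl
  have hkey' := key w' hw'ne hBw'
  rw [← hw'eq] at hkey'
  have hsub' : Filter.Tendsto (fun n => (⟨δ (φ n) • (a' : CP1), hinv (g (φ n)) a'⟩ : realPoints))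
      Filter.atTop (𝓝 ⟨_, hreal'⟩) := tendsto_subtype_rng.mpr hkey'
  have hπ' : Filter.Tendsto (fun n => γ (φ n) • y) Filter.atTop
      (𝓝 (π ⟨_, hreal'⟩)) := by
    have h5 := (hπ.tendsto _).comp hsub'
    have h6 : (fun n => π (⟨δ (φ n) • (a' : CP1), hinv (g (φ n)) a'⟩ : realPoints))
        = fun n => γ (φ n) • y := by
      funext n
      rw [heqv (g (φ n)) a', hg, hydef]
    rw [← h6]
    exact h5
  have hxmφ : Filter.Tendsto (fun n => γ (φ n) • y) Filter.atTop (𝓝 xm) :=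
    hymx.comp hφ.tendsto_atTop
  have hxmeq : xm = π ⟨_, hreal'⟩ := tendsto_nhds_unique hxmφ hπ'
  apply hnepm
  rw [hxpeq, hxmeq]
  congr 1
  exact Subtype.ext himg
end
end

section
/- Let G be a group acting on a set X and let x₀ ∈ X. Suppose that the stabilizer Stab_G(x₀) = {g ∈ G : g·x₀ = x₀} is finitely generated, and that there exists a finitely generated subgroup H ≤ G whose induced action on X has only finitely many orbits. Then G is finitely generated. -/
set_option synthInstance.maxHeartbeats 1000000

noncomputable section

/-! ### Basic definitions: limit sets, commensurators, parabolicity, lattices -/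

open Filter Topology

/-- If a group `G` acts on a set `X` with a finitely generated stabilizer of some point
`x₀ ∈ X`, and some finitely generated subgroup `H ≤ G` has only finitely many orbits on `X`,
then `G` is finitely generated. -/
theorem fg_of_fg_stabilizer_and_fg_subgroup_cofinite_orbits
    (G X : Type) [Group G] [MulAction G X] (x₀ : X)
    (hstab : (MulAction.stabilizer G x₀).FG)
    (H : Subgroup G) (hH : H.FG)
    (horb : Finite (MulAction.orbitRel.Quotient H X)) :
    Group.FG G := by
  classical
  obtain ⟨TH, hTH⟩ := hH
  obtain ⟨TS, hTS⟩ := hstab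
  set Q := MulAction.orbitRel.Quotient H X
  have hchoice : ∀ c : Q, ∃ g : G,
      (∃ g' : G, (Quotient.mk'' (g' • x₀) : Q) = c) → (Quotient.mk'' (g • x₀) : Q) = c := by
    intro c
    by_cases h : ∃ g' : G, (Quotient.mk'' (g' • x₀) : Q) = c
    · obtain ⟨g, hg⟩ := h; exact ⟨g, fun _ => hg⟩
    · exact ⟨1, fun h' => absurd h' h⟩
  choose φ hφ using hchoice
  have hfin : (↑TH ∪ ↑TS ∪ Set.range φ : Set G).Finite :=
    (TH.finite_toSet.union TS.finite_toSet).union (Set.finite_range φ)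
  refine Group.fg_iff.mpr ⟨_, ?_, hfin⟩
  rw [eq_top_iff]
  intro g _
  set S : Set G := ↑TH ∪ ↑TS ∪ Set.range φ with hS
  have hHle : H ≤ Subgroup.closure S := by
    rw [← hTH]
    exact Subgroup.closure_mono fun a ha => Or.inl (Or.inl ha)
  have hSle : MulAction.stabilizer G x₀ ≤ Subgroup.closure S := by
    rw [← hTS]
    exact Subgroup.closure_mono fun a ha => Or.inl (Or.inr ha)
  set c : Q := Quotient.mk'' (g • x₀)
  have hc : (Quotient.mk'' (φ c • x₀) : Q) = c := hφ c ⟨g, rfl⟩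
  have hrel : (MulAction.orbitRel H X) (φ c • x₀) (g • x₀) := Quotient.eq''.mp hc
  rw [MulAction.orbitRel_apply] at hrel
  obtain ⟨h, hh⟩ := hrel
  have key : ((h : G) * g) • x₀ = φ c • x₀ := by rw [mul_smul]; exact hh
  have hstabmem : ((h : G) * g)⁻¹ * (φ c) ∈ MulAction.stabilizer G x₀ := by
    rw [MulAction.mem_stabilizer_iff, mul_smul, inv_smul_eq_iff]
    exact key.symm
  have hg : g = (h : G)⁻¹ * (φ c) * (((h : G) * g)⁻¹ * (φ c))⁻¹ := by group
  rw [hg]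
  exact Subgroup.mul_mem _
    (Subgroup.mul_mem _ (Subgroup.inv_mem _ (hHle h.2))
      (Subgroup.subset_closure (Or.inr ⟨c, rfl⟩)))
    (Subgroup.inv_mem _ (hSle hstabmem))
end
end
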